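/- Let M^λ be the compiled model built from a robot model M^R and a human model M^H sharing fluent set F. For every valid plan π^H of M^H and every valid plan π^R of M^R, there exists a valid plan π^λ of M^λ such that H(π^λ) = π^H, R(π^λ) = π^R, exactly one check action fires for each fluent f_i ∈ F^R, and the number of check disagreement actions in π^λ equals |GSD(π^H, M^H, π^R, M^R)|, the cardinality of the symmetric difference of the final states of the two plans. -/

import Mathlib

/-- A STRIPS-style action over fluent type `F`: positive/negative preconditions
and add/delete effects. -/
structure Act (F : Type) where
  prePos : Finset F
  preNeg : Finset F
  addE : Finset F
  delE : Finset F
deriving DecidableEq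

/-- A planning model `M = ⟨F, A, c, I, G⟩`. -/
structure PModel (F : Type) [DecidableEq F] where
  fluents : Finset F
  actions : Finset (Act F)
  cost : Act F → ℕ
  init : Finset F
  goal : Finset F

variable {F : Type} [DecidableEq F]

/-- Action `a` is executable in state `s`. -/
def execAct (s : Finset F) (a : Act F) : Prop :=
  a.prePos ⊆ s ∧ a.preNeg ∩ s = ∅

/-- Transition of one action. -/
def stepAct (s : Finset F) (a : Act F) : Finset F :=
  (s ∪ a.addE) \ a.delE

/-- Transition extended to action sequences. -/
def runSeq (s : Finset F) : List (Act F) → Finset F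
  | [] => s
  | a :: π => runSeq (stepAct s a) π

/-- The action sequence is executable in order from state `s`, using actions of `M`. -/
def ExecFrom (M : PModel F) : Finset F → List (Act F) → Prop
  | _, [] => True
  | s, a :: π => a ∈ M.actions ∧ execAct s a ∧ ExecFrom M (stepAct s a) π

/-- A plan for `M`: executable from the initial state and achieving the goal. -/
def IsPlan (M : PModel F) (π : List (Act F)) : Prop :=
  ExecFrom M M.init π ∧ M.goal ⊆ runSeq M.init π

/-- Cost of a plan. -/
def planCost (M : PModel F) (π : List (Act F)) : ℕ :=
  (π.map M.cost).sum

/-- Cost-optimal plan. -/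
def IsOptimal (M : PModel F) (π : List (Act F)) : Prop :=
  IsPlan M π ∧ ∀ π', IsPlan M π' → planCost M π ≤ planCost M π'

/-- Goal state divergence of plans `π1` of `M1` and `π2` of `M2`:
the symmetric difference of the two final states. -/
def GSD (M1 M2 : PModel F) (π1 π2 : List (Act F)) : Finset F :=
  (runSeq M1.init π1 \ runSeq M2.init π2) ∪ (runSeq M2.init π2 \ runSeq M1.init π1)

/-- All achievable values `|GSD(π1, M1, π2, M2)|` over pairs of valid plans. -/
def gsdVals (M1 M2 : PModel F) : Set ℕ :=
  { n | ∃ π1 π2, IsPlan M1 π1 ∧ IsPlan M2 π2 ∧ n = (GSD M1 M2 π1 π2).card }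

/-- Maximal (worst-case) goal state divergence `GD↑(M1, M2)`. -/
noncomputable def GDup (M1 M2 : PModel F) : ℕ := sSup (gsdVals M1 M2)

/-- Minimal (best-case) goal state divergence `GD↓(M1, M2)`. -/
noncomputable def GDdown (M1 M2 : PModel F) : ℕ := sInf (gsdVals M1 M2)

/-- Fluents of the compiled model `M^λ`: the robot copy `F^R`, the disjoint human copy
`F^H`, the housekeeping fluents `robot_can_act`/`human_can_act`, and one compare fluent
`f^κ` per original fluent. -/
inductive LF (F : Type) where
  | robot : F → LF F
  | human : F → LF F
  | robotCanAct : LF F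
  | humanCanAct : LF F
  | compare : F → LF F
deriving DecidableEq

variable {F : Type} [DecidableEq F] in
/-- A robot action of `M^R` lifted into the compiled model: expressed in the robot copy of
the fluents, with `robot_can_act` added as a positive precondition. -/
def liftR (a : Act F) : Act (LF F) where
  prePos := a.prePos.image LF.robot ∪ {LF.robotCanAct}
  preNeg := a.preNeg.image LF.robot
  addE := a.addE.image LF.robot
  delE := a.delE.image LF.robot

variable {F : Type} [DecidableEq F] in
/-- A human action of `M^H` lifted into the compiled model: expressed in the human copy of
the fluents, with `human_can_act` added as a positive precondition. -/
def liftH (a : Act F) : Act (LF F) where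
  prePos := a.prePos.image LF.human ∪ {LF.humanCanAct}
  preNeg := a.preNeg.image LF.human
  addE := a.addE.image LF.human
  delE := a.delE.image LF.human

variable {F : Type} [DecidableEq F] in
/-- The human flip action: requires the human copy of the goal and `human_can_act`;
deletes `human_can_act` and adds `robot_can_act`. -/
def flipH (MH : PModel F) : Act (LF F) where
  prePos := MH.goal.image LF.human ∪ {LF.humanCanAct}
  preNeg := ∅
  addE := {LF.robotCanAct}
  delE := {LF.humanCanAct}

variable {F : Type} [DecidableEq F] in
/-- The robot flip action: requires the robot goal and `robot_can_act`;
deletes `robot_can_act`. -/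
def flipR (MR : PModel F) : Act (LF F) where
  prePos := MR.goal.image LF.robot ∪ {LF.robotCanAct}
  preNeg := ∅
  addE := ∅
  delE := {LF.robotCanAct}

variable {F : Type} [DecidableEq F] in
/-- Check disagreement action `a^1_{f}`: fires when `f` holds for the robot but not in the
human copy; adds the compare fluent `f^κ`. -/
def chk1 (f : F) : Act (LF F) where
  prePos := {LF.robot f}
  preNeg := {LF.human f, LF.robotCanAct, LF.humanCanAct, LF.compare f}
  addE := {LF.compare f}
  delE := ∅

variable {F : Type} [DecidableEq F] in
/-- Check disagreement action `a^2_{f}`: fires when `f` holds in the human copy but not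
for the robot; adds the compare fluent `f^κ`. -/
def chk2 (f : F) : Act (LF F) where
  prePos := {LF.human f}
  preNeg := {LF.robot f, LF.robotCanAct, LF.humanCanAct, LF.compare f}
  addE := {LF.compare f}
  delE := ∅

variable {F : Type} [DecidableEq F] in
/-- Check agreement action `a^3_{f}`: fires when `f` holds in both copies; adds `f^κ`. -/
def chk3 (f : F) : Act (LF F) where
  prePos := {LF.robot f, LF.human f}
  preNeg := {LF.robotCanAct, LF.humanCanAct, LF.compare f}
  addE := {LF.compare f}
  delE := ∅

variable {F : Type} [DecidableEq F] in
/-- Check agreement action `a^4_{f}`: fires when `f` holds in neither copy; adds `f^κ`. -/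
def chk4 (f : F) : Act (LF F) where
  prePos := ∅
  preNeg := {LF.robot f, LF.human f, LF.robotCanAct, LF.humanCanAct, LF.compare f}
  addE := {LF.compare f}
  delE := ∅

variable {F : Type} [DecidableEq F] in
/-- The compiled model `M^λ` for the pair `⟨M^R, M^H⟩` (sharing fluent set `F = F^R`),
with cost function `c`: lifted robot and human actions, the two flip actions, and the four
check actions per fluent; initial state `I^R ∪ I^H ∪ {human_can_act}`; goal
`G^R ∪ G^H ∪ F^κ`. -/
def compiled (MR MH : PModel F) (c : Act (LF F) → ℕ) : PModel (LF F) where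
  fluents := MR.fluents.image LF.robot ∪ MR.fluents.image LF.human ∪
    {LF.robotCanAct, LF.humanCanAct} ∪ MR.fluents.image LF.compare
  actions := MR.actions.image liftR ∪ MH.actions.image liftH ∪
    {flipH MH, flipR MR} ∪ MR.fluents.image chk1 ∪ MR.fluents.image chk2 ∪
    MR.fluents.image chk3 ∪ MR.fluents.image chk4
  cost := c
  init := MR.init.image LF.robot ∪ MH.init.image LF.human ∪ {LF.humanCanAct}
  goal := MR.goal.image LF.robot ∪ MH.goal.image LF.human ∪ MR.fluents.image LF.compare

variable {F : Type} [DecidableEq F] in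
/-- `H(π^λ)`: the subsequence of human-copy actions appearing in `π^λ`. -/
def humanPart (MH : PModel F) (π : List (Act (LF F))) : List (Act (LF F)) :=
  π.filter (fun a => decide (a ∈ MH.actions.image liftH))

variable {F : Type} [DecidableEq F] in
/-- `R(π^λ)`: the subsequence of robot actions appearing in `π^λ`. -/
def robotPart (MR : PModel F) (π : List (Act (LF F))) : List (Act (LF F)) :=
  π.filter (fun a => decide (a ∈ MR.actions.image liftR))

variable {F : Type} [DecidableEq F] in
/-- `|κ⁻(π^λ)|`: the number of check disagreement actions occurring in `π^λ`. -/
def disCount (MR : PModel F) (π : List (Act (LF F))) : ℕ :=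
  π.countP (fun a => decide (∃ f ∈ MR.fluents, a = chk1 f ∨ a = chk2 f))

variable {F : Type} [DecidableEq F] in
/-- `|κ⁺(π^λ)|`: the number of check agreement actions occurring in `π^λ`. -/
def agrCount (MR : PModel F) (π : List (Act (LF F))) : ℕ :=
  π.countP (fun a => decide (∃ f ∈ MR.fluents, a = chk3 f ∨ a = chk4 f))

variable {F : Type} [DecidableEq F] in
/-- A well-formed planning model: initial state, goal, and all action components are
contained in the fluent set. -/
def WellFormed (M : PModel F) : Prop :=
  M.init ⊆ M.fluents ∧ M.goal ⊆ M.fluents ∧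
  ∀ a ∈ M.actions,
    a.prePos ⊆ M.fluents ∧ a.preNeg ⊆ M.fluents ∧
    a.addE ⊆ M.fluents ∧ a.delE ⊆ M.fluents


section Aux
variable {F : Type} [DecidableEq F]

/-- Canonical compiled-state shape. -/
def st (sR sH : Finset F) (r h : Bool) (K : Finset F) : Finset (LF F) :=
  sR.image LF.robot ∪ sH.image LF.human ∪
  ((if r then {LF.robotCanAct} else ∅) ∪ (if h then {LF.humanCanAct} else ∅)) ∪
  K.image LF.compare

@[simp] lemma robot_mem_st {sR sH : Finset F} {r h K f} :
    LF.robot f ∈ st sR sH r h K ↔ f ∈ sR := by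
  cases r <;> cases h <;> simp [st]

@[simp] lemma human_mem_st {sR sH : Finset F} {r h K f} :
    LF.human f ∈ st sR sH r h K ↔ f ∈ sH := by
  cases r <;> cases h <;> simp [st]

@[simp] lemma compare_mem_st {sR sH : Finset F} {r h K f} :
    LF.compare f ∈ st sR sH r h K ↔ f ∈ K := by
  cases r <;> cases h <;> simp [st]

@[simp] lemma rca_mem_st {sR sH : Finset F} {r h K} :
    LF.robotCanAct ∈ st sR sH r h K ↔ r = true := by
  cases r <;> cases h <;> simp [st]

@[simp] lemma hca_mem_st {sR sH : Finset F} {r h K} :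
    LF.humanCanAct ∈ st sR sH r h K ↔ h = true := by
  cases r <;> cases h <;> simp [st]

lemma step_liftH {sR sH : Finset F} {r h K} (a : Act F) :
    stepAct (st sR sH r h K) (liftH a) = st sR (stepAct sH a) r h K := by
  ext x; cases x <;> simp [stepAct, liftH]

lemma step_liftR {sR sH : Finset F} {r h K} (a : Act F) :
    stepAct (st sR sH r h K) (liftR a) = st (stepAct sR a) sH r h K := by
  ext x; cases x <;> simp [stepAct, liftR]

lemma exec_liftH {sH : Finset F} {a : Act F} (ha : execAct sH a)
    (sR : Finset F) (r : Bool) (K : Finset F) :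
    execAct (st sR sH r true K) (liftH a) := by
  obtain ⟨h1, h2⟩ := ha
  rw [Finset.eq_empty_iff_forall_notMem] at h2
  constructor
  · intro x hx
    simp only [liftH, Finset.mem_union, Finset.mem_image, Finset.mem_singleton] at hx
    rcases hx with ⟨f, hf, rfl⟩ | rfl
    · simpa using h1 hf
    · simp
  · rw [Finset.eq_empty_iff_forall_notMem]
    intro x hx
    simp only [liftH, Finset.mem_inter, Finset.mem_image] at hx
    obtain ⟨⟨f, hf, rfl⟩, hmem⟩ := hx
    exact h2 f (Finset.mem_inter.mpr ⟨hf, human_mem_st.mp hmem⟩)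

lemma exec_liftR {sR : Finset F} {a : Act F} (ha : execAct sR a)
    (sH : Finset F) (h : Bool) (K : Finset F) :
    execAct (st sR sH true h K) (liftR a) := by
  obtain ⟨h1, h2⟩ := ha
  rw [Finset.eq_empty_iff_forall_notMem] at h2
  constructor
  · intro x hx
    simp only [liftR, Finset.mem_union, Finset.mem_image, Finset.mem_singleton] at hx
    rcases hx with ⟨f, hf, rfl⟩ | rfl
    · simpa using h1 hf
    · simp
  · rw [Finset.eq_empty_iff_forall_notMem]
    intro x hx
    simp only [liftR, Finset.mem_inter, Finset.mem_image] at hx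
    obtain ⟨⟨f, hf, rfl⟩, hmem⟩ := hx
    exact h2 f (Finset.mem_inter.mpr ⟨hf, robot_mem_st.mp hmem⟩)

lemma human_phase (MR MH : PModel F) (c : Act (LF F) → ℕ)
    (π : List (Act F)) :
    ∀ s : Finset F, ∀ sR K : Finset F, ∀ r : Bool, ExecFrom MH s π →
    ExecFrom (compiled MR MH c) (st sR s r true K) (π.map liftH) ∧
    runSeq (st sR s r true K) (π.map liftH) = st sR (runSeq s π) r true K := by
  induction π with
  | nil => intro s sR K r _; exact ⟨trivial, rfl⟩
  | cons a π ih =>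
    intro s sR K r hex
    obtain ⟨hmem, hexa, hrest⟩ := hex
    have hstep := step_liftH (sR := sR) (sH := s) (r := r) (h := true) (K := K) a
    obtain ⟨ih1, ih2⟩ := ih (stepAct s a) sR K r hrest
    refine ⟨⟨?_, exec_liftH hexa sR r K, ?_⟩, ?_⟩
    · simp only [compiled, Finset.mem_union]
      exact Or.inl (Or.inl (Or.inl (Or.inl (Or.inl
        (Or.inr (Finset.mem_image_of_mem liftH hmem))))))
    · rw [hstep]; exact ih1
    · show runSeq (stepAct (st sR s r true K) (liftH a)) (π.map liftH) = _
      rw [hstep]; exact ih2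

lemma robot_phase (MR MH : PModel F) (c : Act (LF F) → ℕ)
    (π : List (Act F)) :
    ∀ s : Finset F, ∀ sH K : Finset F, ∀ h : Bool, ExecFrom MR s π →
    ExecFrom (compiled MR MH c) (st s sH true h K) (π.map liftR) ∧
    runSeq (st s sH true h K) (π.map liftR) = st (runSeq s π) sH true h K := by
  induction π with
  | nil => intro s sH K h _; exact ⟨trivial, rfl⟩
  | cons a π ih =>
    intro s sH K h hex
    obtain ⟨hmem, hexa, hrest⟩ := hex
    have hstep := step_liftR (sR := s) (sH := sH) (r := true) (h := h) (K := K) a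
    obtain ⟨ih1, ih2⟩ := ih (stepAct s a) sH K h hrest
    refine ⟨⟨?_, exec_liftR hexa sH h K, ?_⟩, ?_⟩
    · simp only [compiled, Finset.mem_union]
      exact Or.inl (Or.inl (Or.inl (Or.inl (Or.inl (Or.inl
        (Finset.mem_image_of_mem liftR hmem))))))
    · rw [hstep]; exact ih1
    · show runSeq (stepAct (st s sH true h K) (liftR a)) (π.map liftR) = _
      rw [hstep]; exact ih2

lemma exec_flipH (MH : PModel F) {sR sH K} {r : Bool} (hg : MH.goal ⊆ sH) :
    execAct (st sR sH r true K) (flipH MH) := by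
  constructor
  · intro x hx
    simp only [flipH, Finset.mem_union, Finset.mem_image, Finset.mem_singleton] at hx
    rcases hx with ⟨f, hf, rfl⟩ | rfl
    · simpa using hg hf
    · simp
  · simp [flipH]

lemma step_flipH (MH : PModel F) {sR sH K} {r : Bool} :
    stepAct (st sR sH r true K) (flipH MH) = st sR sH true false K := by
  ext x; cases x <;> simp [stepAct, flipH]

lemma exec_flipR (MR : PModel F) {sR sH K} {h : Bool} (hg : MR.goal ⊆ sR) :
    execAct (st sR sH true h K) (flipR MR) := by
  constructor
  · intro x hx
    simp only [flipR, Finset.mem_union, Finset.mem_image, Finset.mem_singleton] at hx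
    rcases hx with ⟨f, hf, rfl⟩ | rfl
    · simpa using hg hf
    · simp
  · simp [flipR]

lemma step_flipR (MR : PModel F) {sR sH K} {h : Bool} :
    stepAct (st sR sH true h K) (flipR MR) = st sR sH false h K := by
  ext x; cases x <;> simp [stepAct, flipR]

/-- The chosen check action for fluent `f`. -/
def chooseChk (sR sH : Finset F) (f : F) : Act (LF F) :=
  if f ∈ sR then (if f ∈ sH then chk3 f else chk1 f)
  else (if f ∈ sH then chk2 f else chk4 f)

lemma chooseChk_addE (sR sH : Finset F) (f : F) :
    (chooseChk sR sH f).addE = {LF.compare f} := by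
  unfold chooseChk; split <;> split <;> simp [chk1, chk2, chk3, chk4]

lemma chooseChk_delE (sR sH : Finset F) (f : F) :
    (chooseChk sR sH f).delE = ∅ := by
  unfold chooseChk; split <;> split <;> simp [chk1, chk2, chk3, chk4]

lemma step_chooseChk {sR sH K : Finset F} (f : F) :
    stepAct (st sR sH false false K) (chooseChk sR sH f)
      = st sR sH false false (insert f K) := by
  rw [stepAct, chooseChk_addE, chooseChk_delE]
  ext x; cases x <;> simp [Finset.mem_insert, or_comm]

lemma exec_chooseChk {sR sH K : Finset F} {f : F} (hfK : f ∉ K) :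
    execAct (st sR sH false false K) (chooseChk sR sH f) := by
  unfold chooseChk
  by_cases h1 : f ∈ sR <;> by_cases h2 : f ∈ sH <;>
    simp [h1, h2, execAct, chk1, chk2, chk3, chk4, Finset.subset_iff,
      Finset.eq_empty_iff_forall_notMem, hfK]

lemma chooseChk_mem (MR MH : PModel F) (c : Act (LF F) → ℕ)
    {sR sH : Finset F} {f : F} (hf : f ∈ MR.fluents) :
    chooseChk sR sH f ∈ (compiled MR MH c).actions := by
  simp only [compiled, Finset.mem_union]
  unfold chooseChk
  by_cases h1 : f ∈ sR <;> by_cases h2 : f ∈ sH <;> simp [h1, h2]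
  · exact Or.inl (Or.inr ⟨f, hf, rfl⟩)
  · exact Or.inl (Or.inl (Or.inl (Or.inr ⟨f, hf, rfl⟩)))
  · exact Or.inl (Or.inl (Or.inr ⟨f, hf, rfl⟩))
  · exact Or.inr ⟨f, hf, rfl⟩

lemma check_phase (MR MH : PModel F) (c : Act (LF F) → ℕ) (sR sH : Finset F)
    (L : List F) :
    ∀ K : Finset F, (∀ f ∈ L, f ∈ MR.fluents) → (∀ f ∈ L, f ∉ K) → L.Nodup →
    ExecFrom (compiled MR MH c) (st sR sH false false K) (L.map (chooseChk sR sH)) ∧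
    runSeq (st sR sH false false K) (L.map (chooseChk sR sH))
      = st sR sH false false (K ∪ L.toFinset) := by
  induction L with
  | nil => intro K _ _ _; exact ⟨trivial, by simp [runSeq]⟩
  | cons f L ih =>
    intro K hL hK hnd
    have hstep := step_chooseChk (sR := sR) (sH := sH) (K := K) f
    have hfL : f ∉ L := (List.nodup_cons.mp hnd).1
    obtain ⟨ih1, ih2⟩ := ih (insert f K)
      (fun g hg => hL g (List.mem_cons_of_mem _ hg))
      (fun g hg => by
        simp only [Finset.mem_insert, not_or]
        exact ⟨fun e => hfL (e ▸ hg), hK g (List.mem_cons_of_mem _ hg)⟩)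
      (List.nodup_cons.mp hnd).2
    refine ⟨⟨chooseChk_mem MR MH c (hL f (List.mem_cons_self)),
      exec_chooseChk (hK f (List.mem_cons_self)), ?_⟩, ?_⟩
    · show ExecFrom _ (stepAct _ _) _
      rw [hstep]; exact ih1
    · show runSeq (stepAct (st sR sH false false K) (chooseChk sR sH f))
        (L.map (chooseChk sR sH)) = _
      rw [hstep, ih2, List.toFinset_cons, Finset.insert_union, Finset.union_insert]

@[simp] lemma runSeq_cons {s : Finset F} {a : Act F} {l : List (Act F)} :
    runSeq s (a :: l) = runSeq (stepAct s a) l := rfl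

lemma runSeq_append (s : Finset F) (l1 l2 : List (Act F)) :
    runSeq s (l1 ++ l2) = runSeq (runSeq s l1) l2 := by
  induction l1 generalizing s with
  | nil => rfl
  | cons a l ih => simp [runSeq, ih]

lemma ExecFrom_append {M : PModel F} {s : Finset F} {l1 l2 : List (Act F)}
    (h1 : ExecFrom M s l1) (h2 : ExecFrom M (runSeq s l1) l2) :
    ExecFrom M s (l1 ++ l2) := by
  induction l1 generalizing s with
  | nil => exact h2
  | cons a l ih => exact ⟨h1.1, h1.2.1, ih h1.2.2 h2⟩

lemma mem_actions_of_ExecFrom {M : PModel F} :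
    ∀ {l : List (Act F)} {s : Finset F}, ExecFrom M s l → ∀ a ∈ l, a ∈ M.actions := by
  intro l
  induction l with
  | nil => intro s _ a ha; simp at ha
  | cons b l ih =>
    intro s hex a ha
    rcases List.mem_cons.mp ha with rfl | ha
    · exact hex.1
    · exact ih hex.2.2 a ha

lemma runSeq_subset {M : PModel F} (hwf : WellFormed M) :
    ∀ {l : List (Act F)} {s : Finset F}, s ⊆ M.fluents → ExecFrom M s l →
      runSeq s l ⊆ M.fluents := by
  intro l
  induction l with
  | nil => intro s hs _; exact hs
  | cons a l ih =>
    intro s hs hex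
    refine ih ?_ hex.2.2
    intro x hx
    rw [stepAct] at hx
    rcases Finset.mem_union.mp (Finset.mem_sdiff.mp hx).1 with h | h
    · exact hs h
    · exact (hwf.2.2 a hex.1).2.2.1 h

lemma compiled_init (MR MH : PModel F) (c : Act (LF F) → ℕ) :
    (compiled MR MH c).init = st MR.init MH.init false true ∅ := by
  ext x; cases x <;> simp [compiled, st]

lemma goal_sub {MR MH : PModel F} {c : Act (LF F) → ℕ} {sR sH : Finset F}
    (hGR : MR.goal ⊆ sR) (hGH : MH.goal ⊆ sH) :
    (compiled MR MH c).goal ⊆ st sR sH false false MR.fluents := by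
  intro x hx
  simp only [compiled, Finset.mem_union, Finset.mem_image] at hx
  rcases hx with (⟨f, hf, rfl⟩ | ⟨f, hf, rfl⟩) | ⟨f, hf, rfl⟩
  · simp [hGR hf]
  · simp [hGH hf]
  · simp [hf]

lemma mem_of_eq_singleton {α : Type*} [DecidableEq α] {s : Finset α} {x : α}
    (h : s = {x}) : x ∈ s := h ▸ Finset.mem_singleton_self x

lemma noChk_liftH (a : Act F) (f : F) : (liftH a).addE ≠ {LF.compare f} := by
  intro h
  have := mem_of_eq_singleton h
  simp [liftH] at this

lemma noChk_liftR (a : Act F) (f : F) : (liftR a).addE ≠ {LF.compare f} := by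
  intro h
  have := mem_of_eq_singleton h
  simp [liftR] at this

lemma noChk_flipH (MH : PModel F) (f : F) : (flipH MH).addE ≠ {LF.compare f} := by
  intro h
  have := mem_of_eq_singleton h
  simp [flipH] at this

lemma noChk_flipR (MR : PModel F) (f : F) : (flipR MR).addE ≠ {LF.compare f} := by
  intro h
  have := mem_of_eq_singleton h
  simp [flipR] at this

lemma addE_of_chk {x : Act (LF F)} {f : F}
    (h : x = chk1 f ∨ x = chk2 f ∨ x = chk3 f ∨ x = chk4 f) :
    x.addE = {LF.compare f} := by
  rcases h with rfl | rfl | rfl | rfl <;> simp [chk1, chk2, chk3, chk4]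

lemma liftH_ne_liftR (a b : Act F) : liftH a ≠ liftR b := by
  intro h
  have h1 : LF.humanCanAct ∈ (liftH a).prePos := by simp [liftH]
  rw [h] at h1
  simp [liftR] at h1

lemma liftH_ne_flipH (a : Act F) (MH : PModel F) : liftH a ≠ flipH MH := by
  intro h
  have h1 : LF.robotCanAct ∈ (flipH MH).addE := by simp [flipH]
  rw [← h] at h1
  simp [liftH] at h1

lemma liftH_ne_flipR (a : Act F) (MR : PModel F) : liftH a ≠ flipR MR := by
  intro h
  have h1 : LF.robotCanAct ∈ (flipR MR).delE := by simp [flipR]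
  rw [← h] at h1
  simp [liftH] at h1

lemma liftR_ne_flipH (a : Act F) (MH : PModel F) : liftR a ≠ flipH MH := by
  intro h
  have h1 : LF.robotCanAct ∈ (flipH MH).addE := by simp [flipH]
  rw [← h] at h1
  simp [liftR] at h1

lemma liftR_ne_flipR (a : Act F) (MR : PModel F) : liftR a ≠ flipR MR := by
  intro h
  have h1 : LF.robotCanAct ∈ (flipR MR).delE := by simp [flipR]
  rw [← h] at h1
  simp [liftR] at h1

lemma liftH_ne_chooseChk (a : Act F) (sR sH : Finset F) (g : F) :
    liftH a ≠ chooseChk sR sH g := by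
  intro h
  exact noChk_liftH a g (h ▸ chooseChk_addE sR sH g)

lemma liftR_ne_chooseChk (a : Act F) (sR sH : Finset F) (g : F) :
    liftR a ≠ chooseChk sR sH g := by
  intro h
  exact noChk_liftR a g (h ▸ chooseChk_addE sR sH g)

lemma flipH_ne_chooseChk (MH : PModel F) (sR sH : Finset F) (g : F) :
    flipH MH ≠ chooseChk sR sH g := by
  intro h
  exact noChk_flipH MH g (h ▸ chooseChk_addE sR sH g)

lemma flipR_ne_chooseChk (MR : PModel F) (sR sH : Finset F) (g : F) :
    flipR MR ≠ chooseChk sR sH g := by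
  intro h
  exact noChk_flipR MR g (h ▸ chooseChk_addE sR sH g)

lemma chooseChk_fluent_eq {sR sH : Finset F} {g f : F}
    (h : chooseChk sR sH g = chk1 f ∨ chooseChk sR sH g = chk2 f ∨
      chooseChk sR sH g = chk3 f ∨ chooseChk sR sH g = chk4 f) : g = f := by
  have := addE_of_chk h
  rw [chooseChk_addE] at this
  simpa using this

lemma chk3_ne_chk1 (g f : F) : chk3 g ≠ chk1 f := by
  intro h
  have hg : g = f := by
    have := congrArg Act.addE h
    simpa [chk3, chk1] using this
  subst hg
  have h2 : (LF.human g ∈ (chk3 g).prePos) = (LF.human g ∈ (chk1 g).prePos) := by rw [h]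
  simp [chk3, chk1] at h2

lemma chk3_ne_chk2 (g f : F) : chk3 g ≠ chk2 f := by
  intro h
  have hg : g = f := by
    have := congrArg Act.addE h
    simpa [chk3, chk2] using this
  subst hg
  have h2 : (LF.robot g ∈ (chk3 g).prePos) = (LF.robot g ∈ (chk2 g).prePos) := by rw [h]
  simp [chk3, chk2] at h2

lemma chk4_ne_chk1 (g f : F) : chk4 g ≠ chk1 f := by
  intro h
  have hg : g = f := by
    have := congrArg Act.addE h
    simpa [chk4, chk1] using this
  subst hg
  have h2 : (LF.robot g ∈ (chk4 g).prePos) = (LF.robot g ∈ (chk1 g).prePos) := by rw [h]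
  simp [chk4, chk1] at h2

lemma chk4_ne_chk2 (g f : F) : chk4 g ≠ chk2 f := by
  intro h
  have hg : g = f := by
    have := congrArg Act.addE h
    simpa [chk4, chk2] using this
  subst hg
  have h2 : (LF.human g ∈ (chk4 g).prePos) = (LF.human g ∈ (chk2 g).prePos) := by rw [h]
  simp [chk4, chk2] at h2

lemma chooseChk_dis_iff (sR sH : Finset F) (fl : Finset F) {g : F} (hg : g ∈ fl) :
    (∃ f ∈ fl, chooseChk sR sH g = chk1 f ∨ chooseChk sR sH g = chk2 f) ↔
      ((g ∈ sR ∧ g ∉ sH) ∨ (g ∈ sH ∧ g ∉ sR)) := by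
  constructor
  · rintro ⟨f, hf, hc⟩
    have hgf : g = f := chooseChk_fluent_eq (by tauto)
    subst hgf
    by_cases h1 : g ∈ sR <;> by_cases h2 : g ∈ sH <;>
      simp only [chooseChk, h1, h2, if_true, if_false] at hc <;> try tauto
    · exact absurd hc (by push_neg; exact ⟨chk3_ne_chk1 g g, chk3_ne_chk2 g g⟩)
    · exact absurd hc (by push_neg; exact ⟨chk4_ne_chk1 g g, chk4_ne_chk2 g g⟩)
  · intro h
    refine ⟨g, hg, ?_⟩
    rcases h with ⟨h1, h2⟩ | ⟨h2, h1⟩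
    · left; simp [chooseChk, h1, h2]
    · right; simp [chooseChk, h1, h2]

omit [DecidableEq F] in
lemma countP_toList (s : Finset F) (p : F → Prop) [DecidablePred p] :
    s.toList.countP (fun a => decide (p a)) = (s.filter p).card := by
  have h1 : Multiset.countP p (↑s.toList) = s.toList.countP (fun a => decide (p a)) :=
    Multiset.coe_countP p s.toList
  rw [← h1, Finset.coe_toList, Multiset.countP_eq_card_filter]
  rfl

end Aux

/-- for every valid plan `π^H` of `M^H` and every valid plan `π^R` of `M^R`,
there is a valid plan `π^λ` of the compiled model `M^λ` with `H(π^λ) = π^H`,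
`R(π^λ) = π^R`, in which exactly one check action fires for each fluent `f ∈ F^R`, and the
number of check disagreement actions equals `|GSD(π^H, M^H, π^R, M^R)|`. -/
theorem compiled_plan_exists {F : Type} [DecidableEq F]
    (MR MH : PModel F) (c : Act (LF F) → ℕ)
    (hsh : MH.fluents = MR.fluents)
    (hwfR : WellFormed MR) (hwfH : WellFormed MH)
    (πH πR : List (Act F)) (hπH : IsPlan MH πH) (hπR : IsPlan MR πR) :
    ∃ π : List (Act (LF F)),
      IsPlan (compiled MR MH c) π ∧
      humanPart MH π = πH.map liftH ∧
      robotPart MR π = πR.map liftR ∧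
      (∀ f ∈ MR.fluents,
        π.countP (fun a => decide (a = chk1 f ∨ a = chk2 f ∨ a = chk3 f ∨ a = chk4 f)) = 1) ∧
      disCount MR π = (GSD MH MR πH πR).card := by
  obtain ⟨hexH, hgH⟩ := hπH
  obtain ⟨hexR, hgR⟩ := hπR
  set sH := runSeq MH.init πH with hsHdef
  set sR := runSeq MR.init πR with hsRdef
  set L := MR.fluents.toList with hLdef
  have hLmem : ∀ f ∈ L, f ∈ MR.fluents := fun f hf => Finset.mem_toList.mp hf
  have hLnd : L.Nodup := Finset.nodup_toList _
  have hu := human_phase MR MH c πH MH.init MR.init ∅ false hexH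
  have hr := robot_phase MR MH c πR MR.init sH ∅ false hexR
  have hchk := check_phase MR MH c sR sH L ∅ hLmem
    (fun f _ => Finset.notMem_empty f) hLnd
  have hKfin : ((∅ : Finset F) ∪ L.toFinset) = MR.fluents := by
    rw [Finset.empty_union, hLdef, Finset.toList_toFinset]
  refine ⟨πH.map liftH ++ flipH MH ::
      (πR.map liftR ++ flipR MR :: L.map (chooseChk sR sH)), ⟨?_, ?_⟩, ?_, ?_, ?_, ?_⟩
  · -- executability
    rw [compiled_init]
    refine ExecFrom_append hu.1 ?_
    rw [hu.2]
    refine ⟨by simp [compiled], exec_flipH MH hgH, ?_⟩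
    rw [step_flipH]
    refine ExecFrom_append hr.1 ?_
    rw [hr.2]
    refine ⟨by simp [compiled], exec_flipR MR hgR, ?_⟩
    rw [step_flipR]
    exact hchk.1
  · -- goal achievement
    have hrun : runSeq (compiled MR MH c).init (πH.map liftH ++ flipH MH ::
        (πR.map liftR ++ flipR MR :: L.map (chooseChk sR sH)))
        = st sR sH false false MR.fluents := by
      rw [compiled_init, runSeq_append, hu.2, runSeq_cons, step_flipH,
        runSeq_append, hr.2, runSeq_cons, step_flipR, hchk.2, hKfin]
    rw [hrun]
    exact goal_sub hgR hgH
  · -- humanPart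
    rw [humanPart, List.filter_append]
    have h1 : List.filter (fun a => decide (a ∈ MH.actions.image liftH))
        (πH.map liftH) = πH.map liftH := by
      rw [List.filter_eq_self]
      intro a ha
      obtain ⟨b, hb, rfl⟩ := List.mem_map.mp ha
      simpa using Finset.mem_image_of_mem liftH (mem_actions_of_ExecFrom hexH b hb)
    have h2 : List.filter (fun a => decide (a ∈ MH.actions.image liftH))
        (flipH MH :: (πR.map liftR ++ flipR MR :: L.map (chooseChk sR sH))) = [] := by
      rw [List.filter_eq_nil_iff]
      intro a ha
      simp only [List.mem_cons, List.mem_append, List.mem_map] at ha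
      simp only [decide_eq_true_eq, Finset.mem_image, not_exists]
      rcases ha with rfl | ⟨c, _, rfl⟩ | rfl | ⟨g, _, rfl⟩ <;> rintro b ⟨_, h⟩
      · exact liftH_ne_flipH b MH h
      · exact liftH_ne_liftR b c h
      · exact liftH_ne_flipR b MR h
      · exact liftH_ne_chooseChk b sR sH g h
    rw [h1, h2, List.append_nil]
  · -- robotPart
    rw [robotPart, List.filter_append]
    have h1 : List.filter (fun a => decide (a ∈ MR.actions.image liftR))
        (πH.map liftH) = [] := by
      rw [List.filter_eq_nil_iff]
      intro a ha
      obtain ⟨b, _, rfl⟩ := List.mem_map.mp ha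
      simp only [decide_eq_true_eq, Finset.mem_image, not_exists]
      rintro c ⟨_, h⟩
      exact liftH_ne_liftR b c h.symm
    have h2 : ¬ (decide (flipH MH ∈ MR.actions.image liftR) = true) := by
      simp only [decide_eq_true_eq, Finset.mem_image, not_exists]
      rintro c ⟨_, h⟩
      exact liftR_ne_flipH c MH h
    have h3 : List.filter (fun a => decide (a ∈ MR.actions.image liftR))
        (πR.map liftR) = πR.map liftR := by
      rw [List.filter_eq_self]
      intro a ha
      obtain ⟨b, hb, rfl⟩ := List.mem_map.mp ha
      simpa using Finset.mem_image_of_mem liftR (mem_actions_of_ExecFrom hexR b hb)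
    have h4 : List.filter (fun a => decide (a ∈ MR.actions.image liftR))
        (flipR MR :: L.map (chooseChk sR sH)) = [] := by
      rw [List.filter_eq_nil_iff]
      intro a ha
      simp only [List.mem_cons, List.mem_map] at ha
      simp only [decide_eq_true_eq, Finset.mem_image, not_exists]
      rcases ha with rfl | ⟨g, _, rfl⟩ <;> rintro b ⟨_, h⟩
      · exact liftR_ne_flipR b MR h
      · exact liftR_ne_chooseChk b sR sH g h
    have h2' : List.filter (fun a => decide (a ∈ MR.actions.image liftR))
        (flipH MH :: (πR.map liftR ++ flipR MR :: L.map (chooseChk sR sH)))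
        = List.filter (fun a => decide (a ∈ MR.actions.image liftR))
          (πR.map liftR ++ flipR MR :: L.map (chooseChk sR sH)) :=
      List.filter_cons_of_neg h2
    rw [h1, h2', List.filter_append, h3, h4, List.append_nil, List.nil_append]
  · -- one check action per fluent
    intro f hf
    simp only [List.countP_append, List.countP_cons]
    have hz1 : List.countP
        (fun a => decide (a = chk1 f ∨ a = chk2 f ∨ a = chk3 f ∨ a = chk4 f))
        (πH.map liftH) = 0 := by
      rw [List.countP_eq_zero]
      intro a ha
      obtain ⟨b, _, rfl⟩ := List.mem_map.mp ha
      simp only [decide_eq_true_eq]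
      exact fun h => noChk_liftH b f (addE_of_chk h)
    have hz2 : List.countP
        (fun a => decide (a = chk1 f ∨ a = chk2 f ∨ a = chk3 f ∨ a = chk4 f))
        (πR.map liftR) = 0 := by
      rw [List.countP_eq_zero]
      intro a ha
      obtain ⟨b, _, rfl⟩ := List.mem_map.mp ha
      simp only [decide_eq_true_eq]
      exact fun h => noChk_liftR b f (addE_of_chk h)
    have hfH : ¬ (flipH MH = chk1 f ∨ flipH MH = chk2 f ∨ flipH MH = chk3 f ∨
        flipH MH = chk4 f) := fun h => noChk_flipH MH f (addE_of_chk h)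
    have hfR : ¬ (flipR MR = chk1 f ∨ flipR MR = chk2 f ∨ flipR MR = chk3 f ∨
        flipR MR = chk4 f) := fun h => noChk_flipR MR f (addE_of_chk h)
    have hc : List.countP
        (fun a => decide (a = chk1 f ∨ a = chk2 f ∨ a = chk3 f ∨ a = chk4 f))
        (L.map (chooseChk sR sH)) = 1 := by
      rw [List.countP_map]
      have := List.countP_congr (l := L)
        (p := (fun a => decide (a = chk1 f ∨ a = chk2 f ∨ a = chk3 f ∨ a = chk4 f)) ∘
          chooseChk sR sH)
        (q := fun g => g == f) ?_
      · rw [this]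
        exact List.count_eq_one_of_mem hLnd (Finset.mem_toList.mpr hf)
      · intro g _
        simp only [Function.comp, decide_eq_true_eq, beq_iff_eq]
        constructor
        · exact fun h => chooseChk_fluent_eq h
        · rintro rfl
          by_cases h1 : g ∈ sR <;> by_cases h2 : g ∈ sH <;> simp [chooseChk, h1, h2]
    rw [hz1, hz2, hc, if_neg (by simpa using hfR), if_neg (by simpa using hfH)]
  · -- disagreement count
    have hsubH : sH ⊆ MR.fluents := hsh ▸ runSeq_subset hwfH hwfH.1 hexH
    have hsubR : sR ⊆ MR.fluents := runSeq_subset hwfR hwfR.1 hexR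
    have hGSD : MR.fluents.filter
        (fun g => (g ∈ sR ∧ g ∉ sH) ∨ (g ∈ sH ∧ g ∉ sR)) = GSD MH MR πH πR := by
      ext g
      simp only [GSD, Finset.mem_filter, Finset.mem_union, Finset.mem_sdiff, ← hsHdef,
        ← hsRdef]
      constructor
      · rintro ⟨_, h⟩; tauto
      · intro h
        refine ⟨?_, by tauto⟩
        rcases h with ⟨h1, _⟩ | ⟨h1, _⟩
        · exact hsubH h1
        · exact hsubR h1
    rw [disCount]
    simp only [List.countP_append, List.countP_cons]
    have hz1 : List.countP
        (fun a => decide (∃ f ∈ MR.fluents, a = chk1 f ∨ a = chk2 f))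
        (πH.map liftH) = 0 := by
      rw [List.countP_eq_zero]
      intro a ha
      obtain ⟨b, _, rfl⟩ := List.mem_map.mp ha
      simp only [decide_eq_true_eq]
      rintro ⟨f, _, h⟩
      exact noChk_liftH b f (addE_of_chk (by tauto))
    have hz2 : List.countP
        (fun a => decide (∃ f ∈ MR.fluents, a = chk1 f ∨ a = chk2 f))
        (πR.map liftR) = 0 := by
      rw [List.countP_eq_zero]
      intro a ha
      obtain ⟨b, _, rfl⟩ := List.mem_map.mp ha
      simp only [decide_eq_true_eq]
      rintro ⟨f, _, h⟩
      exact noChk_liftR b f (addE_of_chk (by tauto))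
    have hfH : ¬ (∃ f ∈ MR.fluents, flipH MH = chk1 f ∨ flipH MH = chk2 f) := by
      rintro ⟨f, _, h⟩
      exact noChk_flipH MH f (addE_of_chk (by tauto))
    have hfR : ¬ (∃ f ∈ MR.fluents, flipR MR = chk1 f ∨ flipR MR = chk2 f) := by
      rintro ⟨f, _, h⟩
      exact noChk_flipR MR f (addE_of_chk (by tauto))
    have hc : List.countP
        (fun a => decide (∃ f ∈ MR.fluents, a = chk1 f ∨ a = chk2 f))
        (L.map (chooseChk sR sH)) = (GSD MH MR πH πR).card := by
      rw [List.countP_map]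
      have hcg := List.countP_congr (l := L)
        (p := (fun a => decide (∃ f ∈ MR.fluents, a = chk1 f ∨ a = chk2 f)) ∘
          chooseChk sR sH)
        (q := fun g => decide ((g ∈ sR ∧ g ∉ sH) ∨ (g ∈ sH ∧ g ∉ sR))) ?_
      · rw [hcg, hLdef, countP_toList, hGSD]
      · intro g hg
        simp only [Function.comp, decide_eq_true_eq]
        exact chooseChk_dis_iff sR sH MR.fluents (hLmem g hg)
    rw [hz1, hz2, hc, if_neg (by simpa using hfR), if_neg (by simpa using hfH)]
    omega
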